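/- For the Poisson distribution with parameter λ, the local limit theorem holds: sup_l |√(2πλ) P(X_λ = l) − exp(−(l−λ)²/(2λ))| → 0 as λ → ∞, where X_λ is Poisson(λ). -/

import Mathlib

open Filter Real
open Topology Asymptotics

noncomputable def pllt_h (t : ℝ) : ℝ := (1 + t) * Real.log (1 + t) - t

lemma pllt_hasDerivAt_h {t : ℝ} (ht : -1 < t) :
    HasDerivAt pllt_h (Real.log (1 + t)) t := by
  have h1 : (0:ℝ) < 1 + t := by linarith
  have : HasDerivAt (fun t : ℝ => (1 + t) * Real.log (1 + t) - t)
      (1 * Real.log (1 + t) + (1 + t) * (1 / (1 + t)) - 1) t := by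
    exact (((hasDerivAt_id t).const_add 1).mul
      (((hasDerivAt_id t).const_add 1).log h1.ne')).sub (hasDerivAt_id t)
  convert this using 1
  · rfl
  · rw [one_mul, mul_one_div_cancel h1.ne']; ring

lemma pllt_log_bound {s : ℝ} (hs : |s| ≤ 1/2) : |Real.log (1 + s) - s| ≤ 2 * s^2 := by
  have h := abs_log_sub_add_sum_range_le (x := -s) (by rw [abs_neg]; linarith [abs_nonneg s]) 1
  simp only [Finset.range_one, Finset.sum_singleton, pow_one] at h
  rw [sub_neg_eq_add] at h
  have e1 : (-s) ^ (0 + 1) / ((0:ℕ) + 1 : ℝ) + Real.log (1 + s) = Real.log (1 + s) - s := by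
    push_cast; ring
  rw [e1, abs_neg] at h
  refine h.trans ?_
  rw [sq_abs]
  have h2 : (1:ℝ)/2 ≤ 1 - |s| := by linarith
  have h3 : s^2 ≤ 2 * s^2 * (1 - |s|) := by nlinarith [sq_nonneg s]
  rw [div_le_iff₀ (by linarith)]
  linarith

lemma pllt_h_nonneg {t : ℝ} (ht : -1 < t) : 0 ≤ pllt_h t := by
  have h1 : (0:ℝ) < 1 + t := by linarith
  have h2 : Real.log (1 / (1 + t)) ≤ 1 / (1 + t) - 1 :=
    Real.log_le_sub_one_of_pos (by positivity)
  rw [Real.log_div one_ne_zero h1.ne', Real.log_one] at h2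
  unfold pllt_h
  have h3 : t / (1 + t) ≤ Real.log (1 + t) := by
    have : 1 / (1 + t) - 1 = -(t / (1+t)) := by field_simp; ring
    rw [this] at h2; linarith
  have h4 : t ≤ (1 + t) * Real.log (1 + t) := by
    calc t = (1 + t) * (t / (1 + t)) := by field_simp
    _ ≤ (1 + t) * Real.log (1 + t) := by
        exact mul_le_mul_of_nonneg_left h3 h1.le
  linarith

lemma pllt_cubic {t : ℝ} (ht : |t| ≤ 1/2) : |pllt_h t - t^2/2| ≤ 2 * |t|^3 := by
  set f : ℝ → ℝ := fun s => pllt_h s - s^2/2 with hf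
  set S : Set ℝ := Set.Icc (-|t|) |t| with hS
  have hd : ∀ s ∈ S, HasDerivWithinAt f (Real.log (1 + s) - s) S s := by
    intro s hs
    have hs1 : -1 < s := by
      have := hs.1; have := abs_nonneg t; simp only [hS, Set.mem_Icc] at hs; linarith [hs.1]
    exact ((pllt_hasDerivAt_h hs1).sub ((hasDerivAt_pow 2 s).div_const 2 |>.congr_deriv
      (by push_cast; ring))).hasDerivWithinAt
  have hb : ∀ s ∈ S, ‖Real.log (1 + s) - s‖ ≤ 2 * t^2 := by
    intro s hs
    simp only [hS, Set.mem_Icc] at hs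
    have habs : |s| ≤ |t| := abs_le.2 ⟨hs.1, hs.2⟩
    have := pllt_log_bound (habs.trans ht)
    rw [Real.norm_eq_abs]
    refine this.trans ?_
    have : s^2 ≤ t^2 := by nlinarith [abs_nonneg s, abs_nonneg t, sq_abs s, sq_abs t]
    linarith
  have key := (convex_Icc (-|t|) |t|).norm_image_sub_le_of_norm_hasDerivWithin_le hd hb
    (Set.mem_Icc.2 ⟨by linarith [abs_nonneg t], abs_nonneg t⟩)
    (Set.mem_Icc.2 ⟨neg_abs_le t, le_abs_self t⟩)
  have hf0 : f 0 = 0 := by simp [hf, pllt_h]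
  rw [hf0, sub_zero, sub_zero, Real.norm_eq_abs, Real.norm_eq_abs] at key
  calc |f t| ≤ 2 * t^2 * |t| := key
  _ = 2 * |t|^3 := by rw [← sq_abs]; ring

lemma pllt_h_mono : MonotoneOn pllt_h (Set.Ici (0:ℝ)) := by
  apply monotoneOn_of_deriv_nonneg (convex_Ici 0)
  · intro x hx
    exact (pllt_hasDerivAt_h (by simp at hx; linarith)).differentiableAt.continuousAt.continuousWithinAt
  · intro x hx
    rw [interior_Ici] at hx
    exact (pllt_hasDerivAt_h (by simp at hx; linarith)).differentiableAt.differentiableWithinAt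
  · intro x hx
    rw [interior_Ici] at hx
    rw [(pllt_hasDerivAt_h (by simp at hx; linarith)).deriv]
    exact Real.log_nonneg (by simp at hx; linarith)

lemma pllt_h_anti : AntitoneOn pllt_h (Set.Ioc (-1:ℝ) 0) := by
  apply antitoneOn_of_deriv_nonpos (convex_Ioc (-1) 0)
  · intro x hx
    exact (pllt_hasDerivAt_h hx.1).differentiableAt.continuousAt.continuousWithinAt
  · intro x hx
    rw [interior_Ioc] at hx
    exact (pllt_hasDerivAt_h hx.1).differentiableAt.differentiableWithinAt
  · intro x hx
    rw [interior_Ioc] at hx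
    rw [(pllt_hasDerivAt_h hx.1).deriv]
    have : 1 + x ≤ 1 := by linarith [hx.2]
    have h0 : (0:ℝ) < 1 + x := by linarith [hx.1]
    exact Real.log_nonpos h0.le this

lemma pllt_h_lower_small {t : ℝ} (h1 : 0 ≤ t) (h2 : t ≤ 1/8) : t^2/4 ≤ pllt_h t := by
  have := pllt_cubic (t := t) (by rw [abs_of_nonneg h1]; linarith)
  rw [abs_of_nonneg h1] at this
  have := abs_le.1 this
  nlinarith [this.1, sq_nonneg t]

lemma pllt_h_tail {τ t : ℝ} (hτ0 : 0 < τ) (hτ : τ ≤ 1/8) (ht1 : -1 < t) (ht : τ ≤ |t|) :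
    τ^2/4 ≤ pllt_h t := by
  rcases le_or_gt t 0 with h0 | h0
  · -- t ≤ -τ
    have htneg : t ≤ -τ := by
      rcases abs_cases t with ⟨he, _⟩ | ⟨he, _⟩
      · rw [he] at ht; linarith
      · rw [he] at ht; linarith
    have h1 : pllt_h (-τ) ≤ pllt_h t := by
      apply pllt_h_anti (Set.mem_Ioc.2 ⟨ht1, h0⟩) (Set.mem_Ioc.2 ⟨by linarith, by linarith⟩) htneg
    have h2 : τ^2/4 ≤ pllt_h (-τ) := by
      have := pllt_cubic (t := -τ) (by rw [abs_of_nonpos (by linarith)]; linarith)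
      rw [abs_of_nonpos (by linarith : -τ ≤ 0)] at this
      have := (abs_le.1 this).1
      nlinarith
    linarith
  · -- t ≥ τ
    have htpos : τ ≤ t := by rwa [abs_of_pos h0] at ht
    rcases le_or_gt t (1/8) with h8 | h8
    · have := pllt_h_lower_small h0.le h8
      nlinarith
    · have h1 : pllt_h (1/8) ≤ pllt_h t :=
        pllt_h_mono (by norm_num) (Set.mem_Ici.2 (by linarith)) (by linarith)
      have h2 : ((1:ℝ)/8)^2/4 ≤ pllt_h (1/8) := pllt_h_lower_small (by norm_num) le_rfl
      nlinarith

lemma pllt_exp_lip {a b : ℝ} (ha : 0 ≤ a) (hb : 0 ≤ b) :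
    |Real.exp (-a) - Real.exp (-b)| ≤ |a - b| := by
  wlog hab : a ≤ b generalizing a b
  · rw [abs_sub_comm, abs_sub_comm a b]; exact this hb ha (by linarith)
  have h1 : Real.exp (-b) ≤ Real.exp (-a) := Real.exp_le_exp.2 (by linarith)
  rw [abs_of_nonneg (by linarith), abs_of_nonpos (by linarith)]
  have h2 : Real.exp (-a) ≤ 1 := Real.exp_le_one_iff.2 (by linarith)
  have h3 : 1 - (b - a) ≤ Real.exp (a - b) := by
    have := Real.add_one_le_exp (a - b); linarith
  have h4 : Real.exp (-b) = Real.exp (-a) * Real.exp (a - b) := by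
    rw [← Real.exp_add]; ring_nf
  nlinarith [Real.exp_pos (-a), Real.exp_pos (a-b), Real.exp_nonneg (a-b)]

lemma pllt_stirling_ge (n : ℕ) (hn : 1 ≤ n) : Real.sqrt π ≤ Stirling.stirlingSeq n := by
  have ht : Tendsto (Stirling.stirlingSeq ∘ Nat.succ) atTop (𝓝 (Real.sqrt π)) :=
    Stirling.tendsto_stirlingSeq_sqrt_pi.comp (tendsto_add_atTop_nat 1)
  obtain ⟨m, rfl⟩ := Nat.exists_eq_add_of_le hn
  exact Stirling.stirlingSeq'_antitone.le_of_tendsto ht m |>.trans_eq (by simp [Nat.succ_eq_add_one, Nat.add_comm])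

lemma pllt_identity {lam : ℝ} (hlam : 0 < lam) {l : ℕ} (hl : 1 ≤ l) :
    Real.sqrt (2 * π * lam) * (Real.exp (-lam) * lam ^ l / (l.factorial : ℝ))
      = (Real.sqrt π / Stirling.stirlingSeq l) * Real.sqrt (lam / l)
        * Real.exp (-(lam * pllt_h (((l : ℝ) - lam) / lam))) := by
  have hl0 : (0:ℝ) < l := by exact_mod_cast hl
  have hs2l : (0:ℝ) < Real.sqrt (2 * l) := Real.sqrt_pos.2 (by positivity)
  have hle : (0:ℝ) < ((l:ℝ) / Real.exp 1) ^ l := by positivity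
  have hfact : (l.factorial : ℝ) = Stirling.stirlingSeq l * (Real.sqrt (2 * l) * ((l:ℝ) / Real.exp 1) ^ l) := by
    rw [Stirling.stirlingSeq]; field_simp
  have hspos : (0:ℝ) < Stirling.stirlingSeq l := by
    obtain ⟨m, rfl⟩ := Nat.exists_eq_add_of_le hl
    have := Stirling.stirlingSeq'_pos m
    simpa [Nat.succ_eq_add_one, Nat.add_comm] using this
  -- exponent identity
  have h1t : 1 + ((l:ℝ) - lam) / lam = l / lam := by field_simp; ring
  have hexp : -(lam * pllt_h (((l : ℝ) - lam) / lam))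
      = (l : ℝ) * Real.log lam - lam - l * Real.log l + l := by
    unfold pllt_h
    rw [h1t, Real.log_div (ne_of_gt hl0) (ne_of_gt hlam)]
    field_simp
    ring
  -- powers as exponentials
  have hlampow : lam ^ l = Real.exp ((l : ℝ) * Real.log lam) := by
    rw [← Real.log_pow, Real.exp_log (by positivity)]
  have hlpow : ((l:ℝ) / Real.exp 1) ^ l = Real.exp ((l:ℝ) * Real.log l - l) := by
    rw [← Real.exp_log hle, Real.log_pow, Real.log_div (ne_of_gt hl0) (Real.exp_ne_zero 1),
      Real.log_exp]
    congr 1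
    push_cast
    ring
  -- sqrt ratio
  have hsqrt : Real.sqrt (2 * π * lam) / Real.sqrt (2 * l)
      = Real.sqrt π * Real.sqrt (lam / l) := by
    rw [← Real.sqrt_div' _ (by positivity), ← Real.sqrt_mul Real.pi_pos.le]
    congr 1
    field_simp
  have hsq2 : Real.sqrt (2 * π * lam) = Real.sqrt π * Real.sqrt (lam / l) * Real.sqrt (2 * l) := by
    rw [← hsqrt]; field_simp
  rw [hfact, hexp, hlampow, hlpow, hsq2]
  rw [show (l:ℝ) * Real.log lam - lam - (l:ℝ) * Real.log l + l
      = (-lam) + ((l:ℝ) * Real.log lam) - ((l:ℝ) * Real.log l - l) by ring]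
  simp only [Real.exp_sub, Real.exp_add]
  have e1 : (0:ℝ) < Real.exp ((l:ℝ) * Real.log l) := Real.exp_pos _
  have e2 : (0:ℝ) < Real.exp (l:ℝ) := Real.exp_pos _
  field_simp

lemma pllt_ev_exp (c C : ℝ) (hc : 0 < c) (hC : 0 < C) :
    ∀ᶠ lam in atTop, Real.exp (-(c * lam ^ ((1:ℝ)/5))) ≤ C := by
  have h1 : Tendsto (fun lam : ℝ => c * lam ^ ((1:ℝ)/5)) atTop atTop :=
    (tendsto_rpow_atTop (by norm_num)).const_mul_atTop hc
  have h2 : Tendsto (fun lam : ℝ => Real.exp (-(c * lam ^ ((1:ℝ)/5)))) atTop (𝓝 0) :=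
    Real.tendsto_exp_atBot.comp (tendsto_neg_atTop_atBot.comp h1)
  exact h2.eventually_le_const hC

lemma pllt_ev_sqrt_exp (c C : ℝ) (hc : 0 < c) (hC : 0 < C) :
    ∀ᶠ lam in atTop, Real.sqrt lam * Real.exp (-(c * lam ^ ((1:ℝ)/5))) ≤ C := by
  have hlog := (isLittleO_log_rpow_atTop (by norm_num : (0:ℝ) < 1/5)).def hc
  filter_upwards [eventually_ge_atTop (1:ℝ), hlog, pllt_ev_exp (c/2) C (by linarith) hC]
    with lam h1 h2 h3
  have hlam : (0:ℝ) < lam := by linarith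
  have hrnn : (0:ℝ) ≤ lam ^ ((1:ℝ)/5) := Real.rpow_nonneg hlam.le _
  rw [Real.norm_eq_abs, Real.norm_eq_abs, abs_of_nonneg (Real.log_nonneg h1),
    abs_of_nonneg hrnn] at h2
  have hsq : Real.sqrt lam = Real.exp (Real.log lam / 2) := by
    rw [Real.sqrt_eq_rpow, Real.rpow_def_of_pos hlam]
    congr 1; ring
  rw [hsq, ← Real.exp_add]
  refine le_trans ?_ h3
  apply Real.exp_le_exp.2
  nlinarith

set_option maxHeartbeats 800000 in
lemma pllt_central (ε' lam τ : ℝ) (l : ℕ) (hε'0 : 0 < ε') (hε'1 : ε' ≤ 1)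
    (hlam : 1 ≤ lam) (hτ0 : 0 < τ) (hτ8 : τ ≤ 1/8) (hτε : τ ≤ ε'/8)
    (hcb : 2 * (lam * τ^3) ≤ ε'/8) (hl1 : 1 ≤ l)
    (hsc : |Stirling.stirlingSeq l - Real.sqrt π| < ε'/8)
    (ht : |((l:ℝ) - lam)/lam| ≤ τ) :
    |(Real.sqrt π / Stirling.stirlingSeq l) * Real.sqrt (lam/l)
        * Real.exp (-(lam * pllt_h (((l:ℝ)-lam)/lam)))
      - Real.exp (-(lam * ((((l:ℝ)-lam)/lam)^2/2)))| ≤ ε'/2 := by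
  have hlam0 : (0:ℝ) < lam := by linarith
  have hl0 : (0:ℝ) < l := by exact_mod_cast hl1
  set t : ℝ := ((l:ℝ) - lam)/lam with htdef
  have ht1 : -1 < t := by rw [htdef, lt_div_iff₀ hlam0]; nlinarith
  have h1t : 1 + t = (l:ℝ) / lam := by rw [htdef]; field_simp; ring
  have h1tpos : 0 < 1 + t := by linarith
  have hπ1 : (1:ℝ) ≤ Real.sqrt π := by
    rw [show (1:ℝ) = Real.sqrt 1 by simp]
    exact Real.sqrt_le_sqrt (by nlinarith [Real.pi_gt_three])
  have hsge := pllt_stirling_ge l hl1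
  have hspos : 0 < Stirling.stirlingSeq l := by linarith
  have hsle : Stirling.stirlingSeq l ≤ Real.sqrt π + ε'/8 := by
    have := (abs_lt.1 hsc).2; linarith
  set a := Real.sqrt π / Stirling.stirlingSeq l with hadef
  set b := Real.sqrt (lam / l) with hbdef
  have ha1 : a ≤ 1 := (div_le_one hspos).2 hsge
  have ha0 : 0 ≤ a := div_nonneg (Real.sqrt_nonneg _) hspos.le
  have hb0 : 0 ≤ b := Real.sqrt_nonneg _
  have hh0 : 0 ≤ pllt_h t := pllt_h_nonneg ht1
  have hE1 : Real.exp (-(lam * pllt_h t)) ≤ 1 := by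
    rw [Real.exp_le_one_iff]; nlinarith
  have hE0 : 0 < Real.exp (-(lam * pllt_h t)) := Real.exp_pos _
  have hlb : lam / (l:ℝ) = 1 / (1 + t) := by rw [h1t, one_div_div]
  have htlo : -τ ≤ t := (abs_le.1 ht).1
  have hthi : t ≤ τ := (abs_le.1 ht).2
  have hτsq : τ^2 ≤ τ/8 := by nlinarith
  have hτcu : τ^3 ≤ τ/64 := by nlinarith
  have haLB : 1 - ε'/8 ≤ a := by
    rw [hadef, le_div_iff₀ hspos]
    nlinarith
  have hbub : b ≤ 1 + τ := by
    rw [hbdef, show (1:ℝ) + τ = Real.sqrt ((1+τ)^2) from (Real.sqrt_sq (by linarith)).symm]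
    apply Real.sqrt_le_sqrt
    rw [hlb, div_le_iff₀ h1tpos]
    nlinarith [mul_nonneg (sq_nonneg (1+τ)) (by linarith : (0:ℝ) ≤ t + τ)]
  have hblb : 1 - τ ≤ b := by
    rw [hbdef, show (1:ℝ) - τ = Real.sqrt ((1-τ)^2) from (Real.sqrt_sq (by linarith)).symm]
    apply Real.sqrt_le_sqrt
    rw [hlb, le_div_iff₀ h1tpos]
    nlinarith [mul_nonneg (sq_nonneg (1-τ)) (by linarith : (0:ℝ) ≤ τ - t)]
  have hab : |a * b - 1| ≤ 3*ε'/8 := by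
    rw [abs_le]
    constructor
    · nlinarith
    · nlinarith
  have hτhalf : |t| ≤ 1/2 := ht.trans (by linarith)
  have hcub := pllt_cubic hτhalf
  have habs3 : |t|^3 ≤ τ^3 := pow_le_pow_left₀ (abs_nonneg t) ht 3
  have hEG : |Real.exp (-(lam * pllt_h t)) - Real.exp (-(lam * (t^2/2)))| ≤ ε'/8 := by
    refine le_trans (pllt_exp_lip (mul_nonneg hlam0.le hh0) (by positivity)) ?_
    rw [show lam * pllt_h t - lam * (t^2/2) = lam * (pllt_h t - t^2/2) by ring,
      abs_mul, abs_of_pos hlam0]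
    calc lam * |pllt_h t - t^2/2| ≤ lam * (2 * |t|^3) :=
          mul_le_mul_of_nonneg_left hcub hlam0.le
      _ ≤ 2 * (lam * τ^3) := by nlinarith
      _ ≤ ε'/8 := hcb
  calc |a * b * Real.exp (-(lam * pllt_h t)) - Real.exp (-(lam * (t^2/2)))|
      = |(a * b - 1) * Real.exp (-(lam * pllt_h t))
        + (Real.exp (-(lam * pllt_h t)) - Real.exp (-(lam * (t^2/2))))| := by
        rw [show a * b * Real.exp (-(lam * pllt_h t)) - Real.exp (-(lam * (t^2/2)))
          = (a * b - 1) * Real.exp (-(lam * pllt_h t))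
            + (Real.exp (-(lam * pllt_h t)) - Real.exp (-(lam * (t^2/2)))) from by ring]
    _ ≤ |(a * b - 1) * Real.exp (-(lam * pllt_h t))|
        + |Real.exp (-(lam * pllt_h t)) - Real.exp (-(lam * (t^2/2)))| := abs_add_le _ _
    _ ≤ 3*ε'/8 + ε'/8 := by
        refine add_le_add ?_ hEG
        rw [abs_mul, abs_of_pos hE0]
        calc |a * b - 1| * Real.exp (-(lam * pllt_h t)) ≤ (3*ε'/8) * 1 :=
              mul_le_mul hab hE1 hE0.le (by linarith)
          _ = 3*ε'/8 := mul_one _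
    _ = ε'/2 := by ring

set_option maxHeartbeats 800000 in
lemma pllt_tail (ε' lam τ : ℝ) (l : ℕ) (hε'0 : 0 < ε')
    (hlam : 1 ≤ lam) (hτ0 : 0 < τ) (hτ8 : τ ≤ 1/8)
    (hx2 : Real.exp (-(lam * τ^2/2)) ≤ ε'/4)
    (hx4 : Real.sqrt lam * Real.exp (-(lam * τ^2/4)) ≤ ε'/4)
    (hl1 : 1 ≤ l) (ht : τ < |((l:ℝ) - lam)/lam|) :
    |(Real.sqrt π / Stirling.stirlingSeq l) * Real.sqrt (lam/l)
        * Real.exp (-(lam * pllt_h (((l:ℝ)-lam)/lam)))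
      - Real.exp (-(lam * ((((l:ℝ)-lam)/lam)^2/2)))| ≤ ε'/2 := by
  have hlam0 : (0:ℝ) < lam := by linarith
  have hl0 : (0:ℝ) < l := by exact_mod_cast hl1
  set t : ℝ := ((l:ℝ) - lam)/lam with htdef
  have ht1 : -1 < t := by rw [htdef, lt_div_iff₀ hlam0]; nlinarith
  have hπ1 : (1:ℝ) ≤ Real.sqrt π := by
    rw [show (1:ℝ) = Real.sqrt 1 by simp]
    exact Real.sqrt_le_sqrt (by nlinarith [Real.pi_gt_three])
  have hsge := pllt_stirling_ge l hl1
  have hspos : 0 < Stirling.stirlingSeq l := by linarith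
  set a := Real.sqrt π / Stirling.stirlingSeq l with hadef
  set b := Real.sqrt (lam / l) with hbdef
  have ha1 : a ≤ 1 := (div_le_one hspos).2 hsge
  have ha0 : 0 ≤ a := div_nonneg (Real.sqrt_nonneg _) hspos.le
  have hb0 : 0 ≤ b := Real.sqrt_nonneg _
  have hhτ := pllt_h_tail hτ0 hτ8 ht1 ht.le
  have hA : a * b * Real.exp (-(lam * pllt_h t)) ≤ ε'/4 := by
    have hbs : b ≤ Real.sqrt lam := by
      apply Real.sqrt_le_sqrt
      apply div_le_self hlam0.le
      exact_mod_cast hl1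
    have hEb : Real.exp (-(lam * pllt_h t)) ≤ Real.exp (-(lam * τ^2/4)) := by
      apply Real.exp_le_exp.2
      have : lam * (τ^2/4) ≤ lam * pllt_h t := mul_le_mul_of_nonneg_left hhτ hlam0.le
      nlinarith
    calc a * b * Real.exp (-(lam * pllt_h t))
        = a * (b * Real.exp (-(lam * pllt_h t))) := by ring
      _ ≤ 1 * (Real.sqrt lam * Real.exp (-(lam * τ^2/4))) := by
          refine mul_le_mul ha1 (mul_le_mul hbs hEb (Real.exp_pos _).le
            (Real.sqrt_nonneg _)) ?_ one_pos.le
          positivity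
      _ = Real.sqrt lam * Real.exp (-(lam * τ^2/4)) := one_mul _
      _ ≤ ε'/4 := hx4
  have hB : Real.exp (-(lam * (t^2/2))) ≤ ε'/4 := by
    refine le_trans (Real.exp_le_exp.2 ?_) hx2
    have ht2 : τ^2 ≤ t^2 := by nlinarith [sq_abs t, abs_nonneg t, ht.le]
    nlinarith
  have hAn : 0 ≤ a * b * Real.exp (-(lam * pllt_h t)) := by positivity
  have hBn : 0 < Real.exp (-(lam * (t^2/2))) := Real.exp_pos _
  rw [abs_le]
  constructor <;> nlinarith

lemma pllt_l0 (ε' lam : ℝ) (hlam : 1 ≤ lam)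
    (hp : Real.sqrt (2 * π * lam) * Real.exp (-lam) ≤ ε'/4)
    (hg : Real.exp (-(lam/2)) ≤ ε'/4) :
    |Real.sqrt (2 * Real.pi * lam)
        * (Real.exp (-lam) * lam ^ (0:ℕ) / ((Nat.factorial 0 : ℕ) : ℝ))
      - Real.exp (-(((0:ℕ) : ℝ) - lam) ^ 2 / (2 * lam))| ≤ ε'/2 := by
  have hlam0 : (0:ℝ) < lam := by linarith
  simp only [pow_zero, Nat.factorial_zero, Nat.cast_one, mul_one, div_one, Nat.cast_zero]
  have hG0 : -((0:ℝ) - lam) ^ 2 / (2 * lam) = -(lam/2) := by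
    field_simp
    ring
  rw [hG0]
  have hpn : 0 ≤ Real.sqrt (2 * π * lam) * Real.exp (-lam) :=
    mul_nonneg (Real.sqrt_nonneg _) (Real.exp_pos _).le
  have hgn := (Real.exp_pos (-(lam/2))).le
  rw [abs_le]
  constructor <;> linarith

lemma pllt_p0 (lam C : ℝ) (hC : 0 ≤ C) (hlam : 1 ≤ lam) (hr15 : lam ^ ((1:ℝ)/5) ≤ lam)
    (h7 : Real.sqrt lam * Real.exp (-(1 * lam ^ ((1:ℝ)/5))) ≤ C) :
    Real.sqrt (2 * π * lam) * Real.exp (-lam) ≤ 3 * C := by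
  have hs1 : Real.sqrt (2 * π * lam) = Real.sqrt (2 * π) * Real.sqrt lam :=
    Real.sqrt_mul (by positivity) lam
  have hs2 : Real.sqrt (2 * π) ≤ 3 := by
    rw [show (3:ℝ) = Real.sqrt 9 by
      rw [show (9:ℝ) = 3^2 by norm_num, Real.sqrt_sq]; norm_num]
    exact Real.sqrt_le_sqrt (by nlinarith [Real.pi_le_four])
  have he : Real.exp (-lam) ≤ Real.exp (-(1 * lam ^ ((1:ℝ)/5))) := by
    apply Real.exp_le_exp.2; linarith
  calc Real.sqrt (2 * π * lam) * Real.exp (-lam)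
      = Real.sqrt (2 * π) * (Real.sqrt lam * Real.exp (-lam)) := by rw [hs1]; ring
    _ ≤ 3 * (Real.sqrt lam * Real.exp (-(1 * lam ^ ((1:ℝ)/5)))) := by
        refine mul_le_mul hs2 (mul_le_mul_of_nonneg_left he (Real.sqrt_nonneg _)) ?_ (by norm_num)
        exact mul_nonneg (Real.sqrt_nonneg _) (Real.exp_pos _).le
    _ ≤ 3 * C := by linarith

set_option maxHeartbeats 800000 in
theorem poisson_local_limit :
    Filter.Tendsto
      (fun lam : ℝ =>
        ⨆ l : ℕ,
          |Real.sqrt (2 * Real.pi * lam)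
              * (Real.exp (-lam) * lam ^ l / (l.factorial : ℝ))
            - Real.exp (-((l : ℝ) - lam) ^ 2 / (2 * lam))|)
      atTop (nhds 0) := by
  rw [NormedAddCommGroup.tendsto_nhds_zero]
  intro ε hε
  set ε' := min ε 1 with hε'def
  have hε'0 : 0 < ε' := lt_min hε one_pos
  have hε'1 : ε' ≤ 1 := min_le_right _ _
  have hε'ε : ε' ≤ ε := min_le_left _ _
  obtain ⟨N₀, hN₀⟩ := Metric.tendsto_atTop.1 Stirling.tendsto_stirlingSeq_sqrt_pi (ε'/8)
    (by positivity)
  have hτev : ∀ᶠ lam : ℝ in atTop, lam ^ (-(2/5) : ℝ) ≤ min (1/8) (ε'/8) :=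
    (tendsto_rpow_neg_atTop (by norm_num)).eventually_le_const (by positivity)
  have hB4 : ∀ᶠ lam : ℝ in atTop, 2 * lam ^ (-(1/5) : ℝ) ≤ ε'/8 := by
    have h := (tendsto_rpow_neg_atTop (by norm_num : (0:ℝ) < 1/5)).const_mul (2:ℝ)
    rw [mul_zero] at h
    exact h.eventually_le_const (by positivity)
  filter_upwards [eventually_ge_atTop (1:ℝ), eventually_ge_atTop (2*((max N₀ 1 : ℕ):ℝ)),
    hτev, hB4,
    pllt_ev_exp (1/2) (ε'/4) (by norm_num) (by positivity),
    pllt_ev_sqrt_exp (1/4) (ε'/4) (by norm_num) (by positivity),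
    pllt_ev_sqrt_exp 1 (ε'/12) (by norm_num) (by positivity)]
    with lam h1 h2 h3 h4 h5 h6 h7
  have hlam : (0:ℝ) < lam := by linarith
  set τ : ℝ := lam ^ (-(2/5) : ℝ) with hτdef
  have hτ0 : 0 < τ := Real.rpow_pos_of_pos hlam _
  have hτ8 : τ ≤ 1/8 := h3.trans (min_le_left _ _)
  have hτε : τ ≤ ε'/8 := h3.trans (min_le_right _ _)
  have hr15 : lam ^ ((1:ℝ)/5) ≤ lam := by
    nth_rewrite 2 [← Real.rpow_one lam]
    exact Real.rpow_le_rpow_of_exponent_le h1 (by norm_num)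
  have hτ2 : lam * τ^2 = lam ^ ((1:ℝ)/5) := by
    rw [hτdef, ← Real.rpow_natCast (lam ^ (-(2/5):ℝ)) 2, ← Real.rpow_mul hlam.le]
    nth_rewrite 1 [← Real.rpow_one lam]
    rw [← Real.rpow_add hlam]
    norm_num
  have hτ3 : lam * τ^3 = lam ^ (-(1/5) : ℝ) := by
    rw [hτdef, ← Real.rpow_natCast (lam ^ (-(2/5):ℝ)) 3, ← Real.rpow_mul hlam.le]
    nth_rewrite 1 [← Real.rpow_one lam]
    rw [← Real.rpow_add hlam]
    norm_num
  have hcb : 2 * (lam * τ^3) ≤ ε'/8 := by rw [hτ3]; exact h4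
  have hx2 : Real.exp (-(lam * τ^2/2)) ≤ ε'/4 := by
    have e : lam * τ^2/2 = 1/2 * lam ^ ((1:ℝ)/5) := by rw [hτ2]; ring
    rw [e]; exact h5
  have hx4 : Real.sqrt lam * Real.exp (-(lam * τ^2/4)) ≤ ε'/4 := by
    have e : lam * τ^2/4 = 1/4 * lam ^ ((1:ℝ)/5) := by rw [hτ2]; ring
    rw [e]; exact h6
  have hp0 : Real.sqrt (2 * π * lam) * Real.exp (-lam) ≤ ε'/4 := by
    have := pllt_p0 lam (ε'/12) (by positivity) h1 hr15 h7
    linarith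
  have hg0 : Real.exp (-(lam/2)) ≤ ε'/4 := by
    refine le_trans (Real.exp_le_exp.2 ?_) h5
    linarith
  have key : ∀ l : ℕ, |Real.sqrt (2 * Real.pi * lam)
        * (Real.exp (-lam) * lam ^ l / (l.factorial : ℝ))
      - Real.exp (-((l : ℝ) - lam) ^ 2 / (2 * lam))| ≤ ε'/2 := by
    intro l
    rcases Nat.eq_zero_or_pos l with rfl | hl1
    · exact pllt_l0 ε' lam h1 hp0 hg0
    · have hG : -((l:ℝ) - lam) ^ 2 / (2 * lam) = -(lam * ((((l:ℝ)-lam)/lam)^2/2)) := by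
        field_simp
      rw [pllt_identity hlam hl1, hG]
      by_cases hc : |((l:ℝ) - lam)/lam| ≤ τ
      · -- central: derive l ≥ N₀
        have htlo : -τ ≤ ((l:ℝ) - lam)/lam := (abs_le.1 hc).1
        rw [le_div_iff₀ hlam] at htlo
        have hmul : lam * τ ≤ lam * (1/8) := mul_le_mul_of_nonneg_left hτ8 hlam.le
        have hNl : ((max N₀ 1 : ℕ):ℝ) ≤ (l:ℝ) := by nlinarith
        have hNl' : N₀ ≤ l := by
          have : (N₀:ℝ) ≤ ((max N₀ 1 : ℕ):ℝ) := by exact_mod_cast le_max_left N₀ 1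
          exact_mod_cast this.trans hNl
        have hsc := hN₀ l hNl'
        rw [Real.dist_eq] at hsc
        exact pllt_central ε' lam τ l hε'0 hε'1 h1 hτ0 hτ8 hτε hcb hl1 hsc hc
      · push_neg at hc
        exact pllt_tail ε' lam τ l hε'0 h1 hτ0 hτ8 hx2 hx4 hl1 hc
  have hsup_le : (⨆ l : ℕ, |Real.sqrt (2 * Real.pi * lam)
        * (Real.exp (-lam) * lam ^ l / (l.factorial : ℝ))
      - Real.exp (-((l : ℝ) - lam) ^ 2 / (2 * lam))|) ≤ ε'/2 := ciSup_le key
  have hsup_nonneg : 0 ≤ ⨆ l : ℕ, |Real.sqrt (2 * Real.pi * lam)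
        * (Real.exp (-lam) * lam ^ l / (l.factorial : ℝ))
      - Real.exp (-((l : ℝ) - lam) ^ 2 / (2 * lam))| :=
    Real.iSup_nonneg fun l => abs_nonneg _
  rw [Real.norm_eq_abs, abs_of_nonneg hsup_nonneg]
  linarith
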